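/- Let d ≥ 2, let G_d, p, and A be as in the d-dimensional construction (A contracting the second coordinate by factor 2). Then the framework G_d(A∘p) is globally rigid in ℝ^d: every configuration q : {1,...,2^{d-1}+3} → ℝ^d with |qᵢ - qⱼ| = |Apᵢ - Apⱼ| for all edges {i,j} of G_d satisfies |qᵢ - qⱼ| = |Apᵢ - Apⱼ| for all pairs i, j. -/

import Mathlib

/-- The point of ℝ^d with first coordinate `a`, second coordinate `b`, and remaining
`d-2` coordinates given by `w`. -/
noncomputable def vec (d : ℕ) (a b : ℝ) (w : Fin (d-2) → ℝ) : EuclideanSpace ℝ (Fin d) :=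
  WithLp.toLp 2 fun i => if i.1 = 0 then a else if i.1 = 1 then b else
    if h : i.1 - 2 < d - 2 then w ⟨i.1 - 2, h⟩ else 0

/-- Membership in the "hub" vertex set {1, 4, 5, ..., 2^(d-1)+3} (1-based labels). -/
def IsHub (d m : ℕ) : Prop := m = 1 ∨ (4 ≤ m ∧ m ≤ 2^(d-1)+3)

/-- The edge set of the graph G_d on {1, ..., 2^(d-1)+3}: all pairs of hub vertices;
{1,2} and {2,2k} for 2 ≤ k ≤ 2^(d-2)+1; {1,3} and {3,2k+1} for 2 ≤ k ≤ 2^(d-2)+1;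
and {2,3}. -/
def Ed (d : ℕ) : Set (ℕ × ℕ) :=
  {e | (IsHub d e.1 ∧ IsHub d e.2 ∧ e.1 ≠ e.2) ∨ e = (1,2) ∨
    (∃ k, 2 ≤ k ∧ k ≤ 2^(d-2)+1 ∧ e = (2, 2*k)) ∨ e = (1,3) ∨
    (∃ k, 2 ≤ k ∧ k ≤ 2^(d-2)+1 ∧ e = (3, 2*k+1)) ∨ e = (2,3)}

/-- The affine map A of ℝ^d contracting the second coordinate by a factor of 2. -/
noncomputable def Amap (d : ℕ) (x : EuclideanSpace ℝ (Fin d)) : EuclideanSpace ℝ (Fin d) :=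
  WithLp.toLp 2 fun i => if i.1 = 1 then x i / 2 else x i


open RealInnerProductSpace Finset


lemma vec_sub (d : ℕ) (a b a' b' : ℝ) (w w' : Fin (d-2) → ℝ) :
    vec d a b w - vec d a' b' w' = vec d (a-a') (b-b') (w-w') := by
  ext i
  show vec d a b w i - vec d a' b' w' i = _
  simp only [vec, PiLp.toLp_apply]
  split_ifs <;> simp

lemma Amap_vec (d : ℕ) (a b : ℝ) (w : Fin (d-2) → ℝ) :
    Amap d (vec d a b w) = vec d a (b/2) w := by
  ext i
  simp only [Amap, vec, PiLp.toLp_apply]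
  split_ifs <;> simp_all

lemma inner_vec (d : ℕ) (hd : 2 ≤ d) (a b a' b' : ℝ) (w w' : Fin (d-2) → ℝ) :
    ⟪vec d a b w, vec d a' b' w'⟫ = a*a' + b*b' + ∑ i, w i * w' i := by
  have h : d = 2 + (d - 2) := by omega
  rw [PiLp.inner_apply]
  simp only [RCLike.inner_apply, starRingEnd_apply, star_trivial]
  rw [Finset.sum_congr rfl fun i _ => mul_comm ((vec d a' b' w').ofLp i) _]
  rw [← (finCongr h.symm).sum_comp (fun i => vec d a b w i * vec d a' b' w' i)]
  rw [Fin.sum_univ_add]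
  have hc : ∀ (i : Fin 2), ((finCongr h.symm) (Fin.castAdd (d-2) i) : Fin d).1 = i.1 := by
    intro i; simp
  have hn : ∀ (i : Fin (d-2)), ((finCongr h.symm) (Fin.natAdd 2 i) : Fin d).1 = 2 + i.1 := by
    intro i; simp
  rw [Fin.sum_univ_two]
  have e0 : ∀ (c c' : ℝ) (v v' : Fin (d-2) → ℝ) (i : Fin d), i.1 = 0 → vec d c c' v i = c := by
    intro c c' v v' i hi; simp [vec, hi]
  have e1 : ∀ (c c' : ℝ) (v : Fin (d-2) → ℝ) (i : Fin d), i.1 = 1 → vec d c c' v i = c' := by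
    intro c c' v i hi; simp [vec, hi]
  have e2 : ∀ (c c' : ℝ) (v : Fin (d-2) → ℝ) (i : Fin d) (k : Fin (d-2)), i.1 = 2 + k.1 → vec d c c' v i = v k := by
    intro c c' v i k hi
    show (if i.1 = 0 then c else if i.1 = 1 then c' else if h : i.1 - 2 < d - 2 then v ⟨i.1 - 2, h⟩ else 0) = v k
    rw [if_neg (by omega), if_neg (by omega), dif_pos (show i.1 - 2 < d - 2 by omega)]
    exact congrArg v (Fin.ext (by simp [hi]))
  rw [e0 a b w w' _ (hc 0), e0 a' b' w' w _ (hc 0), e1 a b w _ (hc 1), e1 a' b' w' _ (hc 1)]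
  congr 1
  apply Finset.sum_congr rfl
  intro i _
  rw [e2 a b w _ i (hn i), e2 a' b' w' _ i (hn i)]

open RealInnerProductSpace Finset

lemma span_aux {d : ℕ} (hd : 2 ≤ d) (m T : EuclideanSpace ℝ (Fin d))
    (δ : Fin (d-2) → EuclideanSpace ℝ (Fin d))
    (hmm : ⟪m,m⟫ = 2) (hmT : ⟪m,T⟫ = -2) (hTT : ⟪T,T⟫ = 4)
    (hmδ : ∀ i, ⟪m, δ i⟫ = 0) (hTδ : ∀ i, ⟪T, δ i⟫ = 0)
    (hδδ : ∀ i j, ⟪δ i, δ j⟫ = if i = j then 4 else 0)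
    (ρ : EuclideanSpace ℝ (Fin d)) (h1 : ⟪m, ρ⟫ = 0) (h2 : ⟪T, ρ⟫ = 0)
    (h3 : ∀ i, ⟪δ i, ρ⟫ = 0) : ρ = 0 := by
  set F : Fin d → EuclideanSpace ℝ (Fin d) :=
    fun i => if h : i.1 < d - 2 then δ ⟨i.1, h⟩ else if i.1 = d - 2 then m else T with hF
  have hFδ : ∀ (i : Fin d) (h : i.1 < d - 2), F i = δ ⟨i.1, h⟩ := by
    intro i h; simp [hF, h]
  set i0 : Fin d := ⟨d-2, by omega⟩ with hi0
  set i1 : Fin d := ⟨d-1, by omega⟩ with hi1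
  have hFm : F i0 = m := by simp [hF, hi0]
  have hFT : F i1 = T := by
    have ha : ¬ ((d-1 : ℕ) < d-2) := by omega
    have hb : ¬ ((d-1 : ℕ) = d-2) := by omega
    simp [hF, hi1, ha, hb]
  have hFρ : ∀ i, ⟪F i, ρ⟫ = 0 := by
    intro i
    by_cases h : i.1 < d - 2
    · rw [hFδ i h]; exact h3 _
    · by_cases h' : i.1 = d - 2
      · have he : F i = m := by simp [hF, h, h']
        rw [he]; exact h1
      · have he : F i = T := by simp [hF, h, h']
        rw [he]; exact h2
  have hli : LinearIndependent ℝ F := by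
    rw [Fintype.linearIndependent_iff]
    intro c hc
    have hinner : ∀ z : EuclideanSpace ℝ (Fin d), ∑ i, c i * ⟪z, F i⟫ = 0 := by
      intro z
      have h' := congrArg (fun v => ⟪z, v⟫) hc
      simp only [inner_sum, real_inner_smul_right, inner_zero_right] at h'
      exact h'
    have hz : ∀ (i : Fin d) (h : i.1 < d - 2), c i = 0 := by
      intro i h
      have hs := hinner (F i)
      rw [Finset.sum_eq_single i] at hs
      · rw [hFδ i h, hδδ] at hs; simp at hs; linarith
      · intro j _ hj
        rcases Nat.lt_or_ge j.1 (d-2) with hj' | hj'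
        · rw [hFδ i h, hFδ j hj', hδδ]
          have hne : ¬ ((⟨i.1, h⟩ : Fin (d-2)) = ⟨j.1, hj'⟩) := by
            intro he
            exact hj (Fin.ext (congrArg Fin.val he).symm)
          simp [hne]
        · by_cases hj2 : j.1 = d - 2
          · have he : F j = m := by simp [hF, show ¬ (j.1 < d-2) by omega, hj2]
            rw [hFδ i h, he, real_inner_comm, hmδ, mul_zero]
          · have he : F j = T := by simp [hF, show ¬ (j.1 < d-2) by omega, hj2]
            rw [hFδ i h, he, real_inner_comm, hTδ, mul_zero]
      · simp
    have hne01 : i0 ≠ i1 := by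
      intro h; have := congrArg Fin.val h; simp [hi0, hi1] at this; omega
    have hsum : c i0 • m + c i1 • T = 0 := by
      have hss : ∑ i ∈ ({i0, i1} : Finset (Fin d)), c i • F i = ∑ i, c i • F i := by
        apply Finset.sum_subset (Finset.subset_univ _)
        intro j _ hj
        simp only [Finset.mem_insert, Finset.mem_singleton] at hj
        push_neg at hj
        have ha : j.1 ≠ d - 2 := fun h => hj.1 (Fin.ext (by simp [hi0, h]))
        have hb : j.1 ≠ d - 1 := fun h => hj.2 (Fin.ext (by simp [hi1, h]))
        have hjlt : j.1 < d - 2 := by have := j.2; omega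
        rw [hz j hjlt, zero_smul]
      rw [Finset.sum_pair hne01, hFm, hFT] at hss
      rw [hss, hc]
    have e1 : c i0 * 2 + c i1 * (-2) = 0 := by
      have h' := congrArg (fun v => ⟪m, v⟫) hsum
      simp only [inner_add_right, real_inner_smul_right, inner_zero_right] at h'
      rw [hmm, hmT] at h'
      linarith
    have e2 : c i0 * (-2) + c i1 * 4 = 0 := by
      have h' := congrArg (fun v => ⟪T, v⟫) hsum
      simp only [inner_add_right, real_inner_smul_right, inner_zero_right] at h'
      have hTm : ⟪T, m⟫ = -2 := by rw [real_inner_comm]; exact hmT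
      rw [hTm, hTT] at h'
      linarith
    intro i
    by_cases h : i.1 < d - 2
    · exact hz i h
    · by_cases h' : i.1 = d - 2
      · have he : i = i0 := Fin.ext (by simp [hi0, h'])
        rw [he]; linarith
      · have he : i = i1 := Fin.ext (by simp [hi1]; omega)
        rw [he]; linarith
  have hnonempty : Nonempty (Fin d) := ⟨⟨0, by omega⟩⟩
  have hspan : Submodule.span ℝ (Set.range F) = ⊤ :=
    hli.span_eq_top_of_card_eq_finrank (by simp [finrank_euclideanSpace_fin])
  have hρmem : ρ ∈ Submodule.span ℝ (Set.range F) := hspan ▸ Submodule.mem_top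
  have hall : ∀ x ∈ Submodule.span ℝ (Set.range F), ⟪x, ρ⟫ = 0 := by
    intro x hx
    refine Submodule.span_induction ?_ ?_ ?_ ?_ hx
    · rintro y ⟨i, rfl⟩; exact hFρ i
    · simp
    · intro a b _ _ ha hb; rw [inner_add_left, ha, hb]; ring
    · intro t a _ ha; rw [real_inner_smul_left, ha]; ring
  exact inner_self_eq_zero.mp (hall ρ hρmem)

open Finset

lemma sign_surj' {n : ℕ} (w : ℕ → Fin n → ℝ)
    (hw : ∀ k, 1 ≤ k → k ≤ 2^n → ∀ i, w k i = 1 ∨ w k i = -1)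
    (hwinj : ∀ k l, 1 ≤ k → k ≤ 2^n → 1 ≤ l → l ≤ 2^n → w k = w l → k = l) :
    ((Finset.Icc 1 (2^n)).image w = Fintype.piFinset (fun _ : Fin n => ({1, -1} : Finset ℝ))) := by
  apply Finset.eq_of_subset_of_card_le
  · intro v hv
    simp only [Finset.mem_image, Finset.mem_Icc] at hv
    obtain ⟨k, ⟨hk1, hk2⟩, rfl⟩ := hv
    rw [Fintype.mem_piFinset]
    intro i
    rcases hw k hk1 hk2 i with h | h <;> simp [h]
  · rw [Finset.card_image_of_injOn, Nat.card_Icc]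
    · rw [Fintype.card_piFinset]
      have h2 : ({1, -1} : Finset ℝ).card = 2 := Finset.card_pair (by norm_num)
      simp [h2]
    · intro k hk l hl h
      simp only [Finset.coe_Icc, Set.mem_Icc] at hk hl
      exact hwinj k l hk.1 hk.2 hl.1 hl.2 h

lemma sign_sum' {n : ℕ} (w : ℕ → Fin n → ℝ)
    (hw : ∀ k, 1 ≤ k → k ≤ 2^n → ∀ i, w k i = 1 ∨ w k i = -1)
    (hwinj : ∀ k l, 1 ≤ k → k ≤ 2^n → 1 ≤ l → l ≤ 2^n → w k = w l → k = l) :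
    ∑ k ∈ Finset.Icc 1 (2^n), w k = 0 := by
  have hinj : ∀ x ∈ Finset.Icc 1 (2^n), ∀ y ∈ Finset.Icc 1 (2^n), w x = w y → x = y := by
    intro k hk l hl h
    simp only [Finset.mem_Icc] at hk hl
    exact hwinj k l hk.1 hk.2 hl.1 hl.2 h
  have hsi := Finset.sum_image (s := Finset.Icc 1 (2^n)) (f := fun v : Fin n → ℝ => v) (g := w) hinj
  rw [sign_surj' w hw hwinj] at hsi
  rw [← hsi]
  funext i
  rw [Finset.sum_apply]
  apply Finset.sum_involution
    (g := fun v _ => Function.update v i (- v i))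
  · intro v hv
    simp [Function.update_self]
  · intro v hv _ hcontra
    have := congrFun hcontra i
    rw [Function.update_self] at this
    rw [Fintype.mem_piFinset] at hv
    have hvi := hv i
    simp at hvi
    rcases hvi with h | h <;> rw [h] at this <;> norm_num at this
  · intro v hv
    funext j
    by_cases hj : j = i
    · subst hj; simp [Function.update_self]
    · simp [Function.update_of_ne hj]
  · intro v hv
    rw [Fintype.mem_piFinset] at *
    intro j
    by_cases hj : j = i
    · subst hj
      rw [Function.update_self]
      have hvj := hv j
      simp only [Finset.mem_insert, Finset.mem_singleton] at hvj ⊢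
      rcases hvj with h | h
      · right; rw [h]
      · left; rw [h]; ring
    · rw [Function.update_of_ne hj]
      exact hv j

open Finset

lemma sum_sign_diag {n : ℕ} (i : Fin n) :
    ∑ l : Fin n, (if l = i then (-1:ℝ) else 1) * (if l = i then (-1:ℝ) else 1) = (n:ℝ) := by
  have h : ∀ l : Fin n, (if l = i then (-1:ℝ) else 1) * (if l = i then (-1:ℝ) else 1) = 1 := by
    intro l; split <;> norm_num
  rw [Finset.sum_congr rfl fun l _ => h l, Finset.sum_const, Finset.card_univ, Fintype.card_fin,
    nsmul_eq_mul, mul_one]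

lemma sum_sign_one {n : ℕ} (i : Fin n) :
    ∑ l : Fin n, (1:ℝ) * (if l = i then (-1:ℝ) else 1) = (n:ℝ) - 2 := by
  have h : ∀ l : Fin n, (1:ℝ) * (if l = i then (-1:ℝ) else 1)
      = 1 - 2 * (if l = i then (1:ℝ) else 0) := by
    intro l; split <;> ring
  rw [Finset.sum_congr rfl fun l _ => h l, Finset.sum_sub_distrib, Finset.sum_const,
    ← Finset.mul_sum, Finset.sum_ite_eq' Finset.univ i (fun _ => (1:ℝ))]
  simp [Fintype.card_fin]

lemma sum_sign_one' {n : ℕ} (i : Fin n) :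
    ∑ l : Fin n, (if l = i then (-1:ℝ) else 1) * 1 = (n:ℝ) - 2 := by
  rw [Finset.sum_congr rfl fun l _ => (mul_comm _ _ : (if l = i then (-1:ℝ) else 1) * 1 = _)]
  exact sum_sign_one i

lemma sum_sign_two {n : ℕ} (i i' : Fin n) (h : i ≠ i') :
    ∑ l : Fin n, (if l = i then (-1:ℝ) else 1) * (if l = i' then (-1:ℝ) else 1) = (n:ℝ) - 4 := by
  have hpt : ∀ l : Fin n, (if l = i then (-1:ℝ) else 1) * (if l = i' then (-1:ℝ) else 1)
      = 1 - 2 * (if l = i then (1:ℝ) else 0) - 2 * (if l = i' then (1:ℝ) else 0) := by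
    intro l
    by_cases h1 : l = i <;> by_cases h2 : l = i'
    · exact absurd (h1 ▸ h2) h
    · simp [h1, h2, h]; ring
    · simp [h1, h2, Ne.symm h]; ring
    · simp [h1, h2]
  rw [Finset.sum_congr rfl fun l _ => hpt l]
  rw [Finset.sum_sub_distrib, Finset.sum_sub_distrib, Finset.sum_const,
    ← Finset.mul_sum, ← Finset.mul_sum,
    Finset.sum_ite_eq' Finset.univ i (fun _ => (1:ℝ)),
    Finset.sum_ite_eq' Finset.univ i' (fun _ => (1:ℝ))]
  simp [Fintype.card_fin]
  ring

open RealInnerProductSpace Finset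

section helpers
variable {E : Type*} [NormedAddCommGroup E] [InnerProductSpace ℝ E]

lemma polar_aux (a b a' b' : E) (h1 : ‖a‖ = ‖a'‖) (h2 : ‖b‖ = ‖b'‖)
    (h3 : ‖a - b‖ = ‖a' - b'‖) : ⟪a,b⟫ = ⟪a',b'⟫ := by
  have e1 := norm_sub_sq_real a b
  have e2 := norm_sub_sq_real a' b'
  rw [h1, h2, h3] at e1
  linarith

lemma eq_of_sq_eq {a b : ℝ} (ha : 0 ≤ a) (hb : 0 ≤ b) (h : a^2 = b^2) : a = b := by
  nlinarith [sq_nonneg (a - b), sq_nonneg (a + b)]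

end helpers

set_option maxHeartbeats 1000000 in
lemma solve_aux {d : ℕ} (hd : 2 ≤ d) (x y mq T : EuclideanSpace ℝ (Fin d))
    (δ : Fin (d-2) → EuclideanSpace ℝ (Fin d))
    (hm_m : ⟪mq,mq⟫ = 2) (hm_T : ⟪mq,T⟫ = -2) (hT_T : ⟪T,T⟫ = 4)
    (hm_δ : ∀ l, ⟪mq, δ l⟫ = 0) (hT_δ : ∀ l, ⟪T, δ l⟫ = 0)
    (hδδ : ∀ l l', ⟪δ l, δ l'⟫ = if l = l' then 4 else 0)
    (hx_m : ⟪x, mq⟫ = 1) (hx_δ : ∀ l, ⟪x, δ l⟫ = 0) (hx_x : ⟪x,x⟫ = 5/8)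
    (hy_m : ⟪y, mq⟫ = 8/5 - ⟪y, T⟫) (hy_δ : ∀ l, ⟪y, δ l⟫ = 0)
    (hy_y : ⟪y,y⟫ = 281/200) (hxy : ⟪x,y⟫ = 3/20) :
    ⟪x, T⟫ = -(1/2) ∧ ⟪y, T⟫ = 21/10 := by
  have hρx : x - ((⟪x, T⟫+2)/2) • mq - ((⟪x, T⟫+1)/2) • T = 0 := by
    apply span_aux hd mq T δ hm_m hm_T hT_T hm_δ hT_δ hδδ
    · simp only [inner_sub_right, real_inner_smul_right]
      rw [real_inner_comm x mq, hx_m, hm_m, hm_T]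
      ring
    · simp only [inner_sub_right, real_inner_smul_right]
      rw [real_inner_comm x T, real_inner_comm mq T, hm_T, hT_T]
      ring
    · intro l
      simp only [inner_sub_right, real_inner_smul_right]
      rw [real_inner_comm x (δ l), hx_δ l, real_inner_comm mq (δ l), hm_δ l,
        real_inner_comm T (δ l), hT_δ l]
      ring
  have hXx : x = ((⟪x, T⟫+2)/2) • mq + ((⟪x, T⟫+1)/2) • T := by
    apply sub_eq_zero.mp
    rw [← hρx]; abel
  have hρy : y - ((16/5 - ⟪y, T⟫)/2) • mq - ((4:ℝ)/5) • T = 0 := by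
    apply span_aux hd mq T δ hm_m hm_T hT_T hm_δ hT_δ hδδ
    · simp only [inner_sub_right, real_inner_smul_right]
      rw [real_inner_comm y mq, hy_m, hm_m, hm_T]
      ring
    · simp only [inner_sub_right, real_inner_smul_right]
      rw [real_inner_comm y T, real_inner_comm mq T, hm_T, hT_T]
      ring
    · intro l
      simp only [inner_sub_right, real_inner_smul_right]
      rw [real_inner_comm y (δ l), hy_δ l, real_inner_comm mq (δ l), hm_δ l,
        real_inner_comm T (δ l), hT_δ l]
      ring
  have hXy : y = ((16/5 - ⟪y, T⟫)/2) • mq + ((4:ℝ)/5) • T := by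
    apply sub_eq_zero.mp
    rw [← hρy]; abel
  have Ex : (⟪x, T⟫+2)/2 * 1 + (⟪x, T⟫+1)/2 * ⟪x, T⟫ = 5/8 := by
    have h0 : ⟪x, ((⟪x, T⟫+2)/2) • mq + ((⟪x, T⟫+1)/2) • T⟫ = 5/8 := by
      rw [← hXx]; exact hx_x
    rw [inner_add_right, real_inner_smul_right, real_inner_smul_right, hx_m] at h0
    linarith
  have Ey : (16/5 - ⟪y, T⟫)/2 * (8/5 - ⟪y, T⟫) + 4/5 * ⟪y, T⟫ = 281/200 := by
    have h0 : ⟪y, ((16/5 - ⟪y, T⟫)/2) • mq + ((4:ℝ)/5) • T⟫ = 281/200 := by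
      rw [← hXy]; exact hy_y
    rw [inner_add_right, real_inner_smul_right, real_inner_smul_right, hy_m] at h0
    linarith
  have Exy : (⟪x, T⟫+2)/2 * (8/5 - ⟪y, T⟫) + (⟪x, T⟫+1)/2 * ⟪y, T⟫ = 3/20 := by
    have h0 : ⟪y, ((⟪x, T⟫+2)/2) • mq + ((⟪x, T⟫+1)/2) • T⟫ = 3/20 := by
      rw [← hXx, real_inner_comm x y]; exact hxy
    rw [inner_add_right, real_inner_smul_right, real_inner_smul_right, hy_m] at h0
    linarith
  have hs2 : (2*⟪x, T⟫+1)*(2*⟪x, T⟫+3) = 0 := by linear_combination 8 * Ex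
  have hr2 : (10*⟪y, T⟫-21)*(10*⟪y, T⟫-11) = 0 := by linear_combination 200 * Ey
  rcases mul_eq_zero.mp hs2 with hs | hs <;> rcases mul_eq_zero.mp hr2 with hr | hr
  · constructor <;> linarith
  · exfalso
    have e1 : ⟪x, T⟫ = -(1/2) := by linarith
    have e2 : ⟪y, T⟫ = 11/10 := by linarith
    rw [e1, e2] at Exy; norm_num at Exy
  · exfalso
    have e1 : ⟪x, T⟫ = -(3/2) := by linarith
    have e2 : ⟪y, T⟫ = 21/10 := by linarith
    rw [e1, e2] at Exy; norm_num at Exy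
  · exfalso
    have e1 : ⟪x, T⟫ = -(3/2) := by linarith
    have e2 : ⟪y, T⟫ = 11/10 := by linarith
    rw [e1, e2] at Exy; norm_num at Exy

set_option maxHeartbeats 1600000 in
/-- The framework G_d(A∘p) is globally rigid in ℝ^d: every configuration with the same
edge lengths has the same distances between all pairs of vertices of G_d. -/
theorem stmt_18 (d : ℕ) (hd : 2 ≤ d)
    (w : ℕ → Fin (d-2) → ℝ)
    (hw : ∀ k, 1 ≤ k → k ≤ 2^(d-2) → ∀ i, w k i = 1 ∨ w k i = -1)
    (hwinj : ∀ k l, 1 ≤ k → k ≤ 2^(d-2) → 1 ≤ l → l ≤ 2^(d-2) → w k = w l → k = l)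
    (p : ℕ → EuclideanSpace ℝ (Fin d))
    (hp1 : p 1 = vec d 0 2 (fun _ => 0))
    (hp2 : p 2 = vec d (-1/4) (1/2) (fun _ => 0))
    (hp3 : p 3 = vec d (21/20) (9/10) (fun _ => 0))
    (hpev : ∀ j, 2 ≤ j → j ≤ 2^(d-2)+1 → p (2*j) = vec d (-1) 0 (w (j-1)))
    (hpod : ∀ j, 2 ≤ j → j ≤ 2^(d-2)+1 → p (2*j+1) = vec d 1 0 (w (j-1))) :
    ∀ q : ℕ → EuclideanSpace ℝ (Fin d),
      (∀ e ∈ Ed d, dist (q e.1) (q e.2) = dist (Amap d (p e.1)) (Amap d (p e.2))) →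
      ∀ i j, 1 ≤ i → i ≤ 2^(d-1)+3 → 1 ≤ j → j ≤ 2^(d-1)+3 →
        dist (q i) (q j) = dist (Amap d (p i)) (Amap d (p j)) := by
  intro q hq i j hi1 hi2 hj1 hj2
  obtain ⟨N, hN⟩ : ∃ N, 2^(d-2) = N := ⟨_, rfl⟩
  have hsurj0 := sign_surj' w hw hwinj
  have hsum0 := sign_sum' w hw hwinj
  rw [hN] at hsurj0 hsum0 hpev hpod hw
  have hN1 : 1 ≤ N := by rw [← hN]; exact Nat.one_le_two_pow
  have hNR : (0:ℝ) < (N:ℝ) := by exact_mod_cast hN1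
  have hNne : (N:ℝ) ≠ 0 := ne_of_gt hNR
  have hB : 2^(d-1)+3 = 2*N+3 := by
    rw [show d-1 = (d-2)+1 from by omega, pow_succ, hN]; ring
  rw [hB] at hi2 hj2
  set X : ℕ → EuclideanSpace ℝ (Fin d) := fun m => q m - q 1 with hX
  set P : ℕ → EuclideanSpace ℝ (Fin d) := fun m => Amap d (p m) - Amap d (p 1) with hP
  -- model points
  have hP1 : P 1 = 0 := sub_self _
  have hXone : X 1 = 0 := sub_self _
  have hzfun : (fun _ : Fin (d-2) => (0:ℝ)) = 0 := rfl
  rw [hzfun] at hp1 hp2 hp3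
  have hP2 : P 2 = vec d (-(1/4)) (-(3/4)) 0 := by
    show Amap d (p 2) - Amap d (p 1) = _
    rw [hp2, hp1, Amap_vec, Amap_vec, vec_sub]
    norm_num
  have hP3 : P 3 = vec d (21/20) (-(11/20)) 0 := by
    show Amap d (p 3) - Amap d (p 1) = _
    rw [hp3, hp1, Amap_vec, Amap_vec, vec_sub]
    norm_num
  have hPe : ∀ k, 2 ≤ k → k ≤ N+1 → P (2*k) = vec d (-1) (-1) (w (k-1)) := by
    intro k h1 h2
    show Amap d (p (2*k)) - Amap d (p 1) = _
    rw [hpev k h1 h2, hp1, Amap_vec, Amap_vec, vec_sub]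
    norm_num
  have hPo : ∀ k, 2 ≤ k → k ≤ N+1 → P (2*k+1) = vec d 1 (-1) (w (k-1)) := by
    intro k h1 h2
    show Amap d (p (2*k+1)) - Amap d (p 1) = _
    rw [hpod k h1 h2, hp1, Amap_vec, Amap_vec, vec_sub]
    norm_num
  -- model inner products
  have hM22 : ⟪P 2, P 2⟫ = 5/8 := by rw [hP2, inner_vec d hd]; norm_num
  have hM33 : ⟪P 3, P 3⟫ = 281/200 := by rw [hP3, inner_vec d hd]; norm_num
  have hM23 : ⟪P 2, P 3⟫ = 3/20 := by rw [hP2, hP3, inner_vec d hd]; norm_num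
  have hM2e : ∀ k, 2 ≤ k → k ≤ N+1 → ⟪P 2, P (2*k)⟫ = 1 := by
    intro k h1 h2; rw [hP2, hPe k h1 h2, inner_vec d hd]; norm_num
  have hM2o : ∀ k, 2 ≤ k → k ≤ N+1 → ⟪P 2, P (2*k+1)⟫ = 1/2 := by
    intro k h1 h2; rw [hP2, hPo k h1 h2, inner_vec d hd]; norm_num
  have hM3e : ∀ k, 2 ≤ k → k ≤ N+1 → ⟪P 3, P (2*k)⟫ = -(1/2) := by
    intro k h1 h2; rw [hP3, hPe k h1 h2, inner_vec d hd]; norm_num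
  have hM3o : ∀ k, 2 ≤ k → k ≤ N+1 → ⟪P 3, P (2*k+1)⟫ = 8/5 := by
    intro k h1 h2; rw [hP3, hPo k h1 h2, inner_vec d hd]; norm_num
  have hMee : ∀ k k', 2 ≤ k → k ≤ N+1 → 2 ≤ k' → k' ≤ N+1 →
      ⟪P (2*k), P (2*k')⟫ = 2 + ∑ l, w (k-1) l * w (k'-1) l := by
    intro k k' a1 a2 b1 b2; rw [hPe k a1 a2, hPe k' b1 b2, inner_vec d hd]; ring
  have hMeo : ∀ k k', 2 ≤ k → k ≤ N+1 → 2 ≤ k' → k' ≤ N+1 →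
      ⟪P (2*k), P (2*k'+1)⟫ = ∑ l, w (k-1) l * w (k'-1) l := by
    intro k k' a1 a2 b1 b2; rw [hPe k a1 a2, hPo k' b1 b2, inner_vec d hd]; ring
  have hMoo : ∀ k k', 2 ≤ k → k ≤ N+1 → 2 ≤ k' → k' ≤ N+1 →
      ⟪P (2*k+1), P (2*k'+1)⟫ = 2 + ∑ l, w (k-1) l * w (k'-1) l := by
    intro k k' a1 a2 b1 b2; rw [hPo k a1 a2, hPo k' b1 b2, inner_vec d hd]; ring
  -- distance hypotheses
  have hdist : ∀ a b : ℕ, (a,b) ∈ Ed d → ‖X a - X b‖ = ‖P a - P b‖ := by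
    intro a b hab
    have h := hq (a,b) hab
    rw [dist_eq_norm, dist_eq_norm] at h
    simpa [hX, hP, sub_sub_sub_cancel_right] using h
  have hHub : ∀ m, 4 ≤ m → m ≤ 2*N+3 → IsHub d m := by
    intro m h1 h2; right; refine ⟨h1, ?_⟩; rw [hB]; omega
  have hHub1 : IsHub d 1 := Or.inl rfl
  have hEhh : ∀ a b, 4 ≤ a → a ≤ 2*N+3 → 4 ≤ b → b ≤ 2*N+3 → a ≠ b → (a,b) ∈ Ed d := by
    intro a b a1 a2 b1 b2 hne
    exact Or.inl ⟨hHub a a1 a2, hHub b b1 b2, hne⟩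
  have hE2e : ∀ k, 2 ≤ k → k ≤ N+1 → ((2:ℕ), 2*k) ∈ Ed d := by
    intro k h1 h2
    right; right; left; exact ⟨k, h1, by rw [hN]; omega, rfl⟩
  have hE3o : ∀ k, 2 ≤ k → k ≤ N+1 → ((3:ℕ), 2*k+1) ∈ Ed d := by
    intro k h1 h2
    right; right; right; right; left; exact ⟨k, h1, by rw [hN]; omega, rfl⟩
  have hE23 : ((2:ℕ), 3) ∈ Ed d := by
    right; right; right; right; right; rfl
  have hnorm : ∀ m, 1 ≤ m → m ≤ 2*N+3 → ‖X m‖ = ‖P m‖ := by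
    intro m h1 h2
    rcases eq_or_lt_of_le h1 with h | h
    · rw [← h]; rw [show X 1 = 0 from sub_self _, show P 1 = 0 from sub_self _]
    · have hedge : ((1:ℕ), m) ∈ Ed d := by
        rcases (show m = 2 ∨ m = 3 ∨ 4 ≤ m by omega) with h2' | h2' | h2'
        · subst h2'; right; left; rfl
        · subst h2'; right; right; right; left; rfl
        · exact Or.inl ⟨hHub1, hHub m h2' h2, by omega⟩
      have hh := hdist 1 m hedge
      rw [hXone, hP1, zero_sub, zero_sub, norm_neg, norm_neg] at hh
      exact hh
  have hgX : ∀ a b, (a,b) ∈ Ed d → 1 ≤ a → a ≤ 2*N+3 → 1 ≤ b → b ≤ 2*N+3 →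
      ⟪X a, X b⟫ = ⟪P a, P b⟫ := by
    intro a b hab ha1 ha2 hb1 hb2
    exact polar_aux _ _ _ _ (hnorm a ha1 ha2) (hnorm b hb1 hb2) (hdist a b hab)
  have hgn : ∀ m, 1 ≤ m → m ≤ 2*N+3 → ⟪X m, X m⟫ = ⟪P m, P m⟫ := by
    intro m h1 h2
    rw [real_inner_self_eq_norm_sq, real_inner_self_eq_norm_sq, hnorm m h1 h2]
  -- q-side inner products
  have hg22 : ⟪X 2, X 2⟫ = 5/8 := by rw [hgn 2 (by omega) (by omega), hM22]
  have hg33 : ⟪X 3, X 3⟫ = 281/200 := by rw [hgn 3 (by omega) (by omega), hM33]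
  have hg23 : ⟪X 2, X 3⟫ = 3/20 := by
    rw [hgX 2 3 hE23 (by omega) (by omega) (by omega) (by omega), hM23]
  have hg2e : ∀ k, 2 ≤ k → k ≤ N+1 → ⟪X 2, X (2*k)⟫ = 1 := by
    intro k h1 h2
    rw [hgX 2 (2*k) (hE2e k h1 h2) (by omega) (by omega) (by omega) (by omega), hM2e k h1 h2]
  have hg3o : ∀ k, 2 ≤ k → k ≤ N+1 → ⟪X 3, X (2*k+1)⟫ = 8/5 := by
    intro k h1 h2
    rw [hgX 3 (2*k+1) (hE3o k h1 h2) (by omega) (by omega) (by omega) (by omega), hM3o k h1 h2]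
  have hgee : ∀ k k', 2 ≤ k → k ≤ N+1 → 2 ≤ k' → k' ≤ N+1 →
      ⟪X (2*k), X (2*k')⟫ = 2 + ∑ l, w (k-1) l * w (k'-1) l := by
    intro k k' a1 a2 b1 b2
    by_cases hkk : k = k'
    · subst hkk; rw [hgn (2*k) (by omega) (by omega), hMee k k a1 a2 a1 a2]
    · rw [hgX (2*k) (2*k') (hEhh (2*k) (2*k') (by omega) (by omega) (by omega) (by omega)
        (by omega)) (by omega) (by omega) (by omega) (by omega), hMee k k' a1 a2 b1 b2]
  have hgeo : ∀ k k', 2 ≤ k → k ≤ N+1 → 2 ≤ k' → k' ≤ N+1 →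
      ⟪X (2*k), X (2*k'+1)⟫ = ∑ l, w (k-1) l * w (k'-1) l := by
    intro k k' a1 a2 b1 b2
    rw [hgX (2*k) (2*k'+1) (hEhh (2*k) (2*k'+1) (by omega) (by omega) (by omega) (by omega)
      (by omega)) (by omega) (by omega) (by omega) (by omega), hMeo k k' a1 a2 b1 b2]
  have hgoo : ∀ k k', 2 ≤ k → k ≤ N+1 → 2 ≤ k' → k' ≤ N+1 →
      ⟪X (2*k+1), X (2*k'+1)⟫ = 2 + ∑ l, w (k-1) l * w (k'-1) l := by
    intro k k' a1 a2 b1 b2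
    by_cases hkk : k = k'
    · subst hkk; rw [hgn (2*k+1) (by omega) (by omega), hMoo k k a1 a2 a1 a2]
    · rw [hgX (2*k+1) (2*k'+1) (hEhh (2*k+1) (2*k'+1) (by omega) (by omega) (by omega)
        (by omega) (by omega)) (by omega) (by omega) (by omega) (by omega),
        hMoo k k' a1 a2 b1 b2]
  have hsymW : ∀ (u v : Fin (d-2) → ℝ), ∑ l, u l * v l = ∑ l, v l * u l :=
    fun u v => Finset.sum_congr rfl fun l _ => mul_comm _ _
  have hWdiag : ∀ k, 2 ≤ k → k ≤ N+1 → ∑ l, w (k-1) l * w (k-1) l = ((d:ℝ)-2) := by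
    intro k h1 h2
    have hh : ∀ l, w (k-1) l * w (k-1) l = 1 := by
      intro l
      rcases hw (k-1) (by omega) (by omega) l with h | h <;> rw [h] <;> norm_num
    rw [Finset.sum_congr rfl fun l _ => hh l, Finset.sum_const, Finset.card_univ,
      Fintype.card_fin, nsmul_eq_mul, mul_one, Nat.cast_sub hd]
    norm_num
  -- the common difference vector T
  obtain ⟨T, hTdef⟩ : ∃ T, T = X (2*2+1) - X (2*2) := ⟨_, rfl⟩
  have r22 : (2:ℕ) ≤ N+1 := by omega
  have hT_T : ⟪T, T⟫ = 4 := by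
    rw [hTdef]
    simp only [inner_sub_left, inner_sub_right]
    have h1 := hgoo 2 2 le_rfl r22 le_rfl r22
    have h2 := hgeo 2 2 le_rfl r22 le_rfl r22
    have h2' : ⟪X (2*2+1), X (2*2)⟫ = ∑ l, w (2-1) l * w (2-1) l := by
      rw [real_inner_comm]; exact h2
    have h3 := hgee 2 2 le_rfl r22 le_rfl r22
    have h4 := hWdiag 2 le_rfl r22
    linarith
  have hTfact : ∀ k, 2 ≤ k → k ≤ N+1 → X (2*k+1) = X (2*k) + T := by
    intro k h1 h2
    have hz : ⟪X (2*k+1) - X (2*k) - T, X (2*k+1) - X (2*k) - T⟫ = 0 := by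
      rw [hTdef]
      simp only [inner_sub_left, inner_sub_right]
      have gAA := hgoo k k h1 h2 h1 h2
      have gBB := hgee k k h1 h2 h1 h2
      have gCC := hgoo 2 2 le_rfl r22 le_rfl r22
      have gDD := hgee 2 2 le_rfl r22 le_rfl r22
      have gBA := hgeo k k h1 h2 h1 h2
      have gAB : ⟪X (2*k+1), X (2*k)⟫ = ∑ l, w (k-1) l * w (k-1) l := by
        rw [real_inner_comm]; exact gBA
      have gAC := hgoo k 2 h1 h2 le_rfl r22
      have gCA : ⟪X (2*2+1), X (2*k+1)⟫ = 2 + ∑ l, w (k-1) l * w (2-1) l := by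
        rw [real_inner_comm]; exact gAC
      have gDA := hgeo 2 k le_rfl r22 h1 h2
      have gAD : ⟪X (2*k+1), X (2*2)⟫ = ∑ l, w (2-1) l * w (k-1) l := by
        rw [real_inner_comm]; exact gDA
      have gBC := hgeo k 2 h1 h2 le_rfl r22
      have gCB : ⟪X (2*2+1), X (2*k)⟫ = ∑ l, w (k-1) l * w (2-1) l := by
        rw [real_inner_comm]; exact gBC
      have gDB := hgee 2 k le_rfl r22 h1 h2
      have gBD : ⟪X (2*k), X (2*2)⟫ = 2 + ∑ l, w (2-1) l * w (k-1) l := by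
        rw [real_inner_comm]; exact gDB
      have gDC := hgeo 2 2 le_rfl r22 le_rfl r22
      have gCD : ⟪X (2*2+1), X (2*2)⟫ = ∑ l, w (2-1) l * w (2-1) l := by
        rw [real_inner_comm]; exact gDC
      have hs1 := hsymW (w (k-1)) (w (2-1))
      linarith
    have hz' := inner_self_eq_zero.mp hz
    have hz2 : X (2*k+1) - (X (2*k) + T) = 0 := by rw [← hz']; abel
    exact sub_eq_zero.mp hz2
  -- sums over all even hub vertices
  have hSw : ∑ k ∈ Finset.Icc 2 (N+1), w (k-1) = 0 := by
    rw [← hsum0]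
    apply Finset.sum_nbij' (i := fun k => k - 1) (j := fun k => k + 1)
    · intro a ha; simp only [Finset.mem_Icc] at *; omega
    · intro a ha; simp only [Finset.mem_Icc] at *; omega
    · intro a ha; simp only [Finset.mem_Icc] at ha; omega
    · intro a ha; simp only [Finset.mem_Icc] at ha; omega
    · intro a ha; rfl
  have hSwi : ∀ l, ∑ k ∈ Finset.Icc 2 (N+1), w (k-1) l = 0 := by
    intro l
    have hh := congrFun hSw l
    rwa [Finset.sum_apply, Pi.zero_apply] at hh
  have hrowW : ∀ k, ∑ k' ∈ Finset.Icc 2 (N+1), (∑ l, w (k-1) l * w (k'-1) l) = 0 := by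
    intro k
    rw [Finset.sum_comm]
    rw [Finset.sum_congr rfl fun l _ => by rw [← Finset.mul_sum, hSwi l, mul_zero]]
    exact Finset.sum_const_zero
  have hcolW : ∀ k', ∑ k ∈ Finset.Icc 2 (N+1), (∑ l, w (k-1) l * w (k'-1) l) = 0 := by
    intro k'
    rw [Finset.sum_comm]
    rw [Finset.sum_congr rfl fun l _ => by rw [← Finset.sum_mul, hSwi l, zero_mul]]
    exact Finset.sum_const_zero
  obtain ⟨S, hSdef⟩ : ∃ S, S = ∑ k ∈ Finset.Icc 2 (N+1), X (2*k) := ⟨_, rfl⟩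
  have hcard : (Finset.Icc 2 (N+1)).card = N := by rw [Nat.card_Icc]; omega
  have hx_S : ⟪X 2, S⟫ = N := by
    rw [hSdef, inner_sum]
    rw [Finset.sum_congr rfl fun k hk =>
      hg2e k (Finset.mem_Icc.mp hk).1 (Finset.mem_Icc.mp hk).2]
    rw [Finset.sum_const, hcard, nsmul_eq_mul, mul_one]
  have hy_e : ∀ k, 2 ≤ k → k ≤ N+1 → ⟪X 3, X (2*k)⟫ = 8/5 - ⟪X 3, T⟫ := by
    intro k h1 h2
    have hh : X (2*k) = X (2*k+1) - T := by rw [hTfact k h1 h2]; abel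
    rw [hh, inner_sub_right, hg3o k h1 h2]
  have hy_S : ⟪X 3, S⟫ = (8/5 - ⟪X 3, T⟫) * N := by
    rw [hSdef, inner_sum]
    rw [Finset.sum_congr rfl fun k hk =>
      hy_e k (Finset.mem_Icc.mp hk).1 (Finset.mem_Icc.mp hk).2]
    rw [Finset.sum_const, hcard, nsmul_eq_mul, mul_comm]
  have hT_e : ∀ k, 2 ≤ k → k ≤ N+1 → ⟪T, X (2*k)⟫ = -2 := by
    intro k h1 h2
    rw [hTdef, inner_sub_left]
    have h1' := hgeo k 2 h1 h2 le_rfl r22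
    have hca : ⟪X (2*2+1), X (2*k)⟫ = ∑ l, w (k-1) l * w (2-1) l := by
      rw [real_inner_comm]; exact h1'
    have h2' := hgee 2 k le_rfl r22 h1 h2
    have hs1 := hsymW (w (k-1)) (w (2-1))
    linarith
  have hT_S : ⟪T, S⟫ = -2 * N := by
    rw [hSdef, inner_sum]
    rw [Finset.sum_congr rfl fun k hk =>
      hT_e k (Finset.mem_Icc.mp hk).1 (Finset.mem_Icc.mp hk).2]
    rw [Finset.sum_const, hcard, nsmul_eq_mul]
    ring
  have hS_e : ∀ k, 2 ≤ k → k ≤ N+1 → ⟪S, X (2*k)⟫ = 2*N := by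
    intro k h1 h2
    rw [hSdef, sum_inner]
    rw [Finset.sum_congr rfl fun k' hk' =>
      hgee k' k (Finset.mem_Icc.mp hk').1 (Finset.mem_Icc.mp hk').2 h1 h2]
    rw [Finset.sum_add_distrib, Finset.sum_const, hcard, hcolW k, nsmul_eq_mul]
    ring
  have hS_S : ⟪S, S⟫ = 2*(N:ℝ)^2 := by
    nth_rewrite 2 [hSdef]
    rw [inner_sum]
    rw [Finset.sum_congr rfl fun k hk =>
      hS_e k (Finset.mem_Icc.mp hk).1 (Finset.mem_Icc.mp hk).2]
    rw [Finset.sum_const, hcard, nsmul_eq_mul]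
    ring
  obtain ⟨mq, hmqdef⟩ : ∃ mq, mq = (N:ℝ)⁻¹ • S := ⟨_, rfl⟩
  have hx_m : ⟪X 2, mq⟫ = 1 := by
    rw [hmqdef, real_inner_smul_right, hx_S]; field_simp
  have hy_m : ⟪X 3, mq⟫ = 8/5 - ⟪X 3, T⟫ := by
    rw [hmqdef, real_inner_smul_right, hy_S]; field_simp
  have hT_m : ⟪T, mq⟫ = -2 := by
    rw [hmqdef, real_inner_smul_right, hT_S]; field_simp
  have hm_e : ∀ k, 2 ≤ k → k ≤ N+1 → ⟪mq, X (2*k)⟫ = 2 := by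
    intro k h1 h2
    rw [hmqdef, real_inner_smul_left, hS_e k h1 h2]; field_simp
  have hm_m : ⟪mq, mq⟫ = 2 := by
    rw [hmqdef, real_inner_smul_left, real_inner_smul_right, hS_S]; field_simp
  -- the coordinate difference vectors δ
  have hsurj : ∀ v : Fin (d-2) → ℝ, (∀ l, v l = 1 ∨ v l = -1) →
      ∃ k, (1 ≤ k ∧ k ≤ N) ∧ w k = v := by
    intro v hv
    have hvmem : v ∈ Fintype.piFinset (fun _ : Fin (d-2) => ({1,-1} : Finset ℝ)) := by
      rw [Fintype.mem_piFinset]; intro l; rcases hv l with h | h <;> simp [h]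
    rw [← hsurj0] at hvmem
    simp only [Finset.mem_image, Finset.mem_Icc] at hvmem
    obtain ⟨k, hk, hkv⟩ := hvmem
    exact ⟨k, hk, hkv⟩
  obtain ⟨a, ⟨ha1, ha2⟩, hwa⟩ := hsurj (fun _ => 1) (fun _ => Or.inl rfl)
  have hexb : ∀ l0 : Fin (d-2), ∃ b, ((1 ≤ b ∧ b ≤ N) ∧
      w b = fun l => if l = l0 then -1 else 1) := by
    intro l0; apply hsurj; intro l; by_cases h : l = l0 <;> simp [h]
  choose bf hbf hwb using hexb
  obtain ⟨δ, hδdef⟩ : ∃ δ : Fin (d-2) → EuclideanSpace ℝ (Fin d),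
      δ = fun l0 => X (2*(a+1)) - X (2*(bf l0+1)) := ⟨_, rfl⟩
  have hδδ : ∀ l0 l1, ⟪δ l0, δ l1⟫ = if l0 = l1 then 4 else 0 := by
    intro l0 l1
    rw [hδdef]
    simp only [inner_sub_left, inner_sub_right]
    obtain ⟨hb01, hb02⟩ := hbf l0
    obtain ⟨hb11, hb12⟩ := hbf l1
    have gaa := hgee (a+1) (a+1) (by omega) (by omega) (by omega) (by omega)
    have gab := hgee (a+1) (bf l1+1) (by omega) (by omega) (by omega) (by omega)
    have gba := hgee (bf l0+1) (a+1) (by omega) (by omega) (by omega) (by omega)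
    have gbb := hgee (bf l0+1) (bf l1+1) (by omega) (by omega) (by omega) (by omega)
    simp only [Nat.add_sub_cancel] at gaa gab gba gbb
    rw [hwa, hwb l1] at gab
    rw [hwb l0, hwa] at gba
    rw [hwb l0, hwb l1] at gbb
    rw [hwa] at gaa
    have saa : ∑ l : Fin (d-2), (1:ℝ) * 1 = ((d-2:ℕ):ℝ) := by
      simp [Finset.card_univ]
    have sab := sum_sign_one l1
    have sba := sum_sign_one' l0
    by_cases hll : l0 = l1
    · subst hll
      have sbb := sum_sign_diag l0
      rw [gaa, gab, gba, gbb, if_pos rfl]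
      rw [saa] at gaa ⊢
      linarith [sab, sba, sbb]
    · have sbb := sum_sign_two l0 l1 hll
      rw [gaa, gab, gba, gbb, if_neg hll]
      linarith [saa, sab, sba, sbb]
  have hm_δ : ∀ l0, ⟪mq, δ l0⟫ = 0 := by
    intro l0
    obtain ⟨hb01, hb02⟩ := hbf l0
    rw [hδdef]
    simp only [inner_sub_right]
    rw [hm_e (a+1) (by omega) (by omega), hm_e (bf l0+1) (by omega) (by omega)]
    ring
  have hT_δ : ∀ l0, ⟪T, δ l0⟫ = 0 := by
    intro l0
    obtain ⟨hb01, hb02⟩ := hbf l0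
    rw [hδdef]
    simp only [inner_sub_right]
    rw [hT_e (a+1) (by omega) (by omega), hT_e (bf l0+1) (by omega) (by omega)]
    ring
  have hx_δ : ∀ l0, ⟪X 2, δ l0⟫ = 0 := by
    intro l0
    obtain ⟨hb01, hb02⟩ := hbf l0
    rw [hδdef]
    simp only [inner_sub_right]
    rw [hg2e (a+1) (by omega) (by omega), hg2e (bf l0+1) (by omega) (by omega)]
    ring
  have hy_δ : ∀ l0, ⟪X 3, δ l0⟫ = 0 := by
    intro l0
    obtain ⟨hb01, hb02⟩ := hbf l0
    rw [hδdef]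
    simp only [inner_sub_right]
    rw [hy_e (a+1) (by omega) (by omega), hy_e (bf l0+1) (by omega) (by omega)]
    ring
  have hm_T : ⟪mq, T⟫ = -2 := by rw [real_inner_comm]; exact hT_m
  obtain ⟨hsv, hrv⟩ := solve_aux hd (X 2) (X 3) mq T δ hm_m hm_T hT_T hm_δ hT_δ hδδ
    hx_m hx_δ hg22 hy_m hy_δ hg33 hg23
  -- the two remaining distance classes
  have hg2o : ∀ k, 2 ≤ k → k ≤ N+1 → ⟪X 2, X (2*k+1)⟫ = 1/2 := by
    intro k h1 h2
    rw [hTfact k h1 h2, inner_add_right, hg2e k h1 h2, hsv]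
    norm_num
  have hg3e : ∀ k, 2 ≤ k → k ≤ N+1 → ⟪X 3, X (2*k)⟫ = -(1/2) := by
    intro k h1 h2
    rw [hy_e k h1 h2, hrv]
    norm_num
  -- classification of vertices and the master equality
  have hclass : ∀ m, 1 ≤ m → m ≤ 2*N+3 →
      m = 1 ∨ m = 2 ∨ m = 3 ∨ ∃ k, (2 ≤ k ∧ k ≤ N+1) ∧ (m = 2*k ∨ m = 2*k+1) := by
    intro m h1 h2
    by_cases h4 : m ≤ 3
    · rcases (show m = 1 ∨ m = 2 ∨ m = 3 by omega) with h | h | h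
      · exact Or.inl h
      · exact Or.inr (Or.inl h)
      · exact Or.inr (Or.inr (Or.inl h))
    · right; right; right
      exact ⟨m/2, ⟨by omega, by omega⟩, by omega⟩
  have hgoal : ∀ a b, 1 ≤ a → a ≤ 2*N+3 → 1 ≤ b → b ≤ 2*N+3 →
      ⟪X a, X b⟫ = ⟪P a, P b⟫ := by
    intro a b ha1 ha2 hb1 hb2
    rcases hclass a ha1 ha2 with rfl | rfl | rfl | ⟨ka, ⟨hka1, hka2⟩, hAf⟩
    · rw [hXone, hP1, inner_zero_left, inner_zero_left]
    · rcases hclass b hb1 hb2 with rfl | rfl | rfl | ⟨kb, ⟨hkb1, hkb2⟩, hBf⟩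
      · rw [hXone, hP1, inner_zero_right, inner_zero_right]
      · exact hgn 2 (by omega) (by omega)
      · exact hgX 2 3 hE23 (by omega) (by omega) (by omega) (by omega)
      · rcases hBf with rfl | rfl
        · exact hgX 2 (2*kb) (hE2e kb hkb1 hkb2) (by omega) (by omega) (by omega) (by omega)
        · rw [hg2o kb hkb1 hkb2, hM2o kb hkb1 hkb2]
    · rcases hclass b hb1 hb2 with rfl | rfl | rfl | ⟨kb, ⟨hkb1, hkb2⟩, hBf⟩
      · rw [hXone, hP1, inner_zero_right, inner_zero_right]
      · rw [real_inner_comm (X 2) (X 3), real_inner_comm (P 2) (P 3)]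
        exact hgX 2 3 hE23 (by omega) (by omega) (by omega) (by omega)
      · exact hgn 3 (by omega) (by omega)
      · rcases hBf with rfl | rfl
        · rw [hg3e kb hkb1 hkb2, hM3e kb hkb1 hkb2]
        · exact hgX 3 (2*kb+1) (hE3o kb hkb1 hkb2) (by omega) (by omega) (by omega) (by omega)
    · rcases hclass b hb1 hb2 with rfl | rfl | rfl | ⟨kb, ⟨hkb1, hkb2⟩, hBf⟩
      · rw [hXone, hP1, inner_zero_right, inner_zero_right]
      · rcases hAf with rfl | rfl
        · rw [real_inner_comm (X 2) (X (2*ka)), real_inner_comm (P 2) (P (2*ka))]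
          exact hgX 2 (2*ka) (hE2e ka hka1 hka2) (by omega) (by omega) (by omega) (by omega)
        · rw [real_inner_comm (X 2) (X (2*ka+1)), real_inner_comm (P 2) (P (2*ka+1))]
          rw [hg2o ka hka1 hka2, hM2o ka hka1 hka2]
      · rcases hAf with rfl | rfl
        · rw [real_inner_comm (X 3) (X (2*ka)), real_inner_comm (P 3) (P (2*ka))]
          rw [hg3e ka hka1 hka2, hM3e ka hka1 hka2]
        · rw [real_inner_comm (X 3) (X (2*ka+1)), real_inner_comm (P 3) (P (2*ka+1))]
          exact hgX 3 (2*ka+1) (hE3o ka hka1 hka2) (by omega) (by omega) (by omega) (by omega)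
      · rcases hAf with rfl | rfl <;> rcases hBf with rfl | rfl
        · by_cases heq : ka = kb
          · subst heq; exact hgn (2*ka) (by omega) (by omega)
          · exact hgX (2*ka) (2*kb) (hEhh (2*ka) (2*kb) (by omega) (by omega) (by omega)
              (by omega) (by omega)) (by omega) (by omega) (by omega) (by omega)
        · exact hgX (2*ka) (2*kb+1) (hEhh (2*ka) (2*kb+1) (by omega) (by omega) (by omega)
            (by omega) (by omega)) (by omega) (by omega) (by omega) (by omega)
        · exact hgX (2*ka+1) (2*kb) (hEhh (2*ka+1) (2*kb) (by omega) (by omega) (by omega)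
            (by omega) (by omega)) (by omega) (by omega) (by omega) (by omega)
        · by_cases heq : ka = kb
          · subst heq; exact hgn (2*ka+1) (by omega) (by omega)
          · exact hgX (2*ka+1) (2*kb+1) (hEhh (2*ka+1) (2*kb+1) (by omega) (by omega)
              (by omega) (by omega) (by omega)) (by omega) (by omega) (by omega) (by omega)
  -- conclude
  have hii := hgoal i i hi1 hi2 hi1 hi2
  have hjj := hgoal j j hj1 hj2 hj1 hj2
  have hij := hgoal i j hi1 hi2 hj1 hj2
  have hji : ⟪X j, X i⟫ = ⟪P j, P i⟫ := by
    rw [real_inner_comm (X i) (X j), hij, real_inner_comm]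
  have hqd : dist (q i) (q j) = ‖X i - X j‖ := by
    rw [dist_eq_norm]
    simp only [hX]
    rw [sub_sub_sub_cancel_right]
  have hpd : dist (Amap d (p i)) (Amap d (p j)) = ‖P i - P j‖ := by
    rw [dist_eq_norm]
    simp only [hP]
    rw [sub_sub_sub_cancel_right]
  rw [hqd, hpd]
  apply eq_of_sq_eq (norm_nonneg _) (norm_nonneg _)
  rw [← real_inner_self_eq_norm_sq, ← real_inner_self_eq_norm_sq]
  simp only [inner_sub_left, inner_sub_right]
  rw [hii, hjj, hij, hji]
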